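/- arXiv:1902.01644 — 2 statements merged into one kernel-verified Lean document; each statement's English description precedes it below -/
import Mathlib

section
/- Let τ > 0 and let X ∈ ℝ^{m×n} have singular value decomposition X = Σ_{i=1}^{min{m,n}} σ_i u_i v_iᵀ with σ_1 ≥ σ_2 ≥ … ≥ 0. If ‖X‖_* ≥ τ, then the Euclidean projection of X onto the trace-norm ball of radius τ equals Σ_{i=1}^{min{m,n}} max{0, σ_i − σ} u_i v_iᵀ, where σ ≥ 0 is the unique solution of Σ_{i=1}^{min{m,n}} max{0, σ_i − σ} = τ. Moreover, if there exists r ∈ {1, …, min{m,n} − 1} such that Σ_{i=1}^r σ_i ≥ τ + r·σ_{r+1}, then the rank of this projection is at most r. -/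
/- Common definitions: Frobenius norm and inner product, singular values in
non-increasing order, trace (nuclear) norm, multiplicity of the top singular
value, Euclidean projection onto the trace-norm ball, the spectrahedron and its
projection, sorted eigenvalues of symmetric matrices, best rank-`r`
approximations, and the singular-value soft-thresholding (prox) operator. -/

open scoped BigOperators
open Matrix MeasureTheory ProbabilityTheory

attribute [local instance] Matrix.normedAddCommGroup Matrix.normedSpace

noncomputable section

/-- Frobenius norm of a real matrix. -/
def frobNorm {m n : ℕ} (X : Matrix (Fin m) (Fin n) ℝ) : ℝ :=
  Real.sqrt (∑ i, ∑ j, (X i j) ^ 2)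

/-- Frobenius inner product of two real matrices. -/
def frobInner {m n : ℕ} (A B : Matrix (Fin m) (Fin n) ℝ) : ℝ :=
  ∑ i, ∑ j, A i j * B i j

/-- The continuous linear functional `H ↦ ⟨G, H⟩` (Frobenius inner product);
`HasFDerivAt f (frobCLM G) X` says that `G` is the gradient of `f` at `X`. -/
def frobCLM {m n : ℕ} (G : Matrix (Fin m) (Fin n) ℝ) :
    Matrix (Fin m) (Fin n) ℝ →L[ℝ] ℝ :=
  LinearMap.toContinuousLinearMap
    { toFun := fun H => frobInner G H
      map_add' := fun x y => by
        simp [frobInner, Matrix.add_apply, mul_add, Finset.sum_add_distrib]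
      map_smul' := fun c x => by
        simp [frobInner, Matrix.smul_apply, smul_eq_mul, Finset.mul_sum, mul_left_comm] }

/-- The non-increasing (descending) rearrangement of a finite tuple of reals. -/
def sortedDesc {N : ℕ} (f : Fin N → ℝ) : Fin N → ℝ :=
  fun i => f (Tuple.sort f i.rev)

/-- The singular values of a real `m × n` matrix in non-increasing order
(the square roots of the eigenvalues of `Xᵀ * X`), padded with zeros so that
there are `n` of them. -/
def svalsFin {m n : ℕ} (X : Matrix (Fin m) (Fin n) ℝ) : Fin n → ℝ :=
  sortedDesc (fun i => Real.sqrt ((show (Xᵀ * X).IsHermitian by simpa [Matrix.conjTranspose_eq_transpose_of_trivial] using Matrix.isHermitian_conjTranspose_mul_self X).eigenvalues i))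

/-- `svalI X i` is the `(i+1)`-th largest singular value of `X` (i.e. `0`-indexed:
`svalI X 0 = σ₁(X)`), interpreted as `0` when the index is out of range. -/
def svalI {m n : ℕ} (X : Matrix (Fin m) (Fin n) ℝ) (i : ℕ) : ℝ :=
  if h : i < n then svalsFin X ⟨i, h⟩ else 0

/-- The trace norm (nuclear norm): the sum of the singular values. -/
def traceNorm {m n : ℕ} (X : Matrix (Fin m) (Fin n) ℝ) : ℝ :=
  ∑ i, svalsFin X i

/-- `#σ₁(X)`: the multiplicity of the largest singular value of `X`. -/
def multTop {m n : ℕ} (X : Matrix (Fin m) (Fin n) ℝ) : ℕ :=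
  Nat.card {i : Fin n // svalsFin X i = svalI X 0}

/-- `P` is the Euclidean (Frobenius) projection of `X` onto the trace-norm ball
of radius `τ`. -/
def IsTraceBallProj {m n : ℕ} (τ : ℝ) (X P : Matrix (Fin m) (Fin n) ℝ) : Prop :=
  traceNorm P ≤ τ ∧ ∀ Z, traceNorm Z ≤ τ → frobNorm (X - P) ≤ frobNorm (X - Z)

/-- The Euclidean projection onto the trace-norm ball of radius `τ`. -/
def projTraceBall {m n : ℕ} (τ : ℝ) (X : Matrix (Fin m) (Fin n) ℝ) :
    Matrix (Fin m) (Fin n) ℝ :=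
  open scoped Classical in
  if h : ∃ P, IsTraceBallProj τ X P then h.choose else 0

/-- `Y` is a best rank-`r` approximation of `X` in Frobenius norm. -/
def IsBestRankApprox {m n : ℕ} (r : ℕ) (X Y : Matrix (Fin m) (Fin n) ℝ) : Prop :=
  Y.rank ≤ r ∧ ∀ Z : Matrix (Fin m) (Fin n) ℝ, Z.rank ≤ r → frobNorm (X - Y) ≤ frobNorm (X - Z)

/-- The spectrahedron: positive semidefinite matrices of unit trace. -/
def SpectraSet (n : ℕ) : Set (Matrix (Fin n) (Fin n) ℝ) :=
  {X | X.PosSemidef ∧ X.trace = 1}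

/-- `P` is the Euclidean (Frobenius) projection of `X` onto the spectrahedron. -/
def IsSpectraProj {n : ℕ} (X P : Matrix (Fin n) (Fin n) ℝ) : Prop :=
  P ∈ SpectraSet n ∧ ∀ Z ∈ SpectraSet n, frobNorm (X - P) ≤ frobNorm (X - Z)

/-- The Euclidean projection onto the spectrahedron. -/
def projSpectra {n : ℕ} (X : Matrix (Fin n) (Fin n) ℝ) : Matrix (Fin n) (Fin n) ℝ :=
  open scoped Classical in
  if h : ∃ P, IsSpectraProj X P then h.choose else 0

/-- `evalI X i` is the `(i+1)`-th largest eigenvalue of the symmetric matrix `X`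
(`0`-indexed: `evalI X 0 = λ₁(X)`, `evalI X (n-1) = λ_n(X)`); junk value `0` if
`X` is not symmetric or the index is out of range. -/
def evalI {n : ℕ} (X : Matrix (Fin n) (Fin n) ℝ) (i : ℕ) : ℝ :=
  open scoped Classical in
  if h : i < n then
    (if hX : X.IsHermitian then sortedDesc hX.eigenvalues ⟨i, h⟩ else 0)
  else 0

/-- The multiplicity of the smallest eigenvalue of a symmetric matrix. -/
def multMinEig {n : ℕ} (X : Matrix (Fin n) (Fin n) ℝ) : ℕ :=
  Nat.card {i : Fin n // evalI X i = evalI X (n - 1)}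

/-- `Y` is the value at `X` of the singular-value soft-thresholding operator
`𝒯_η`, characterized as the proximal mapping of `η‖·‖_*`:
the (unique) minimizer of `Z ↦ ½‖X − Z‖_F² + η‖Z‖_*`. -/
def IsSVT {m n : ℕ} (η : ℝ) (X Y : Matrix (Fin m) (Fin n) ℝ) : Prop :=
  ∀ Z : Matrix (Fin m) (Fin n) ℝ,
    frobNorm (X - Y) ^ 2 / 2 + η * traceNorm Y ≤ frobNorm (X - Z) ^ 2 / 2 + η * traceNorm Z

/-- The singular-value soft-thresholding operator `𝒯_η`. -/
def softThresh {m n : ℕ} (η : ℝ) (X : Matrix (Fin m) (Fin n) ℝ) :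
    Matrix (Fin m) (Fin n) ℝ :=
  open scoped Classical in
  if h : ∃ Y, IsSVT η X Y then h.choose else 0

instance {m n : ℕ} : MeasurableSpace (Matrix (Fin m) (Fin n) ℝ) :=
  inferInstanceAs (MeasurableSpace (Fin m → Fin n → ℝ))

end


section Aux
open Matrix Polynomial

lemma sum_sortedDesc {N : ℕ} (f : Fin N → ℝ) : ∑ i, sortedDesc f i = ∑ i, f i := by
  have : ∀ i : Fin N, sortedDesc f i = f ((Fin.revPerm.trans (Tuple.sort f)) i) := fun i => rfl
  simp_rw [this]
  exact Equiv.sum_comp _ f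

lemma sum_dlt {n k : ℕ} (hk : k ≤ n) (G : Fin k → ℝ) :
    ∑ j : Fin n, (if h : (j : ℕ) < k then G ⟨j, h⟩ else 0) = ∑ i : Fin k, G i := by
  set g : ℕ → ℝ := fun j => if h : j < k then G ⟨j, h⟩ else 0 with hg
  have h1 : ∑ j : Fin n, (if h : (j : ℕ) < k then G ⟨j, h⟩ else 0) = ∑ j ∈ Finset.range n, g j := by
    rw [Finset.sum_range fun j => g j]
  have h2 : ∑ i : Fin k, G i = ∑ j ∈ Finset.range k, g j := by
    rw [Finset.sum_range fun j => g j]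
    apply Finset.sum_congr rfl
    intro i _
    simp [hg, i.isLt]
  rw [h1, h2]
  symm
  apply Finset.sum_subset (Finset.range_subset_range.2 hk)
  intro x _ hx
  simp only [Finset.mem_range, not_lt] at hx
  simp [hg, Nat.not_lt.2 hx]

lemma bessel {k n : ℕ} (v : Fin k → Fin n → ℝ)
    (hv : ∀ i j, ∑ t, v i t * v j t = if i = j then (1:ℝ) else 0) (x : Fin n → ℝ) :
    ∑ i, (∑ t, v i t * x t) ^ 2 ≤ ∑ t, x t ^ 2 := by
  set c : Fin k → ℝ := fun i => ∑ t, v i t * x t with hc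
  have key : (0:ℝ) ≤ ∑ t, (x t - ∑ i, c i * v i t) ^ 2 :=
    Finset.sum_nonneg fun t _ => sq_nonneg _
  have expand : ∑ t, (x t - ∑ i, c i * v i t) ^ 2
      = ∑ t, x t ^ 2 - ∑ i, c i ^ 2 := by
    have e1 : ∀ t, (x t - ∑ i, c i * v i t) ^ 2
        = x t ^ 2 - 2 * (x t * ∑ i, c i * v i t) + (∑ i, c i * v i t) * (∑ j, c j * v j t) := by
      intro t; ring
    simp_rw [e1]
    rw [Finset.sum_add_distrib, Finset.sum_sub_distrib, ← Finset.mul_sum]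
    have e2 : ∑ t, x t * ∑ i, c i * v i t = ∑ i, c i ^ 2 := by
      simp_rw [Finset.mul_sum]
      rw [Finset.sum_comm]
      apply Finset.sum_congr rfl
      intro i _
      have : ∑ t, x t * (c i * v i t) = c i * ∑ t, v i t * x t := by
        rw [Finset.mul_sum]; apply Finset.sum_congr rfl; intro t _; ring
      rw [this]; rw [sq]
    have e3 : ∑ t, (∑ i, c i * v i t) * (∑ j, c j * v j t) = ∑ i, c i ^ 2 := by
      simp_rw [Finset.sum_mul_sum]
      rw [Finset.sum_comm]
      have : ∀ i : Fin k, ∑ t, ∑ j, (c i * v i t) * (c j * v j t)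
          = ∑ j, (c i * c j) * ∑ t, v i t * v j t := by
        intro i
        rw [Finset.sum_comm]
        apply Finset.sum_congr rfl
        intro j _
        rw [Finset.mul_sum]
        apply Finset.sum_congr rfl
        intro t _; ring
      simp_rw [this, hv]
      apply Finset.sum_congr rfl
      intro i _
      simp [Finset.mul_sum, mul_ite, sq]
    rw [e2, e3]; ring
  linarith [key, expand ▸ key]

lemma charpoly_diag {N : ℕ} (d : Fin N → ℝ) :
    (Matrix.diagonal d).charpoly = ∏ i, (X - C (d i)) := by
  rw [Matrix.charpoly_of_upperTriangular _ (Matrix.blockTriangular_diagonal d)]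
  simp

lemma charpoly_conj_eq {N : ℕ} (W M V : Matrix (Fin N) (Fin N) ℝ)
    (h1 : W * V = 1) : (W * M * V).charpoly = M.charpoly := by
  have h2 : V * W = 1 := mul_eq_one_comm.mp h1
  let f : ℝ →+* Polynomial ℝ := Polynomial.C
  have hWV : (W.map ⇑f) * (V.map ⇑f) = 1 := by
    rw [← Matrix.map_mul, h1, Matrix.map_one _ (map_zero f) (map_one f)]
  have hscalar : (Matrix.scalar (Fin N)) (X : Polynomial ℝ)
      = (W.map ⇑f) * ((Matrix.scalar (Fin N)) (X : Polynomial ℝ)) * (V.map ⇑f) := by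
    rw [Matrix.mul_assoc,
      (Matrix.scalar_commute (X : Polynomial ℝ) (fun r => Commute.all _ _) (V.map ⇑f)).eq,
      ← Matrix.mul_assoc, hWV, Matrix.one_mul]
  have key : charmatrix (W * M * V) = (W.map ⇑f) * charmatrix M * (V.map ⇑f) := by
    have hq : (W.map ⇑f) * charmatrix M * (V.map ⇑f)
        = (W.map ⇑f) * ((Matrix.scalar (Fin N)) (X : Polynomial ℝ)) * (V.map ⇑f)
          - (W.map ⇑f) * (M.map ⇑f) * (V.map ⇑f) := by
      have hcm : charmatrix M = (Matrix.scalar (Fin N)) (X : Polynomial ℝ) - M.map ⇑f := rfl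
      rw [hcm, Matrix.mul_sub, Matrix.sub_mul]
    have hcm2 : charmatrix (W * M * V)
        = (Matrix.scalar (Fin N)) (X : Polynomial ℝ) - (W * M * V).map ⇑f := rfl
    rw [hcm2, hq, ← hscalar, Matrix.map_mul, Matrix.map_mul]
  rw [Matrix.charpoly, key, Matrix.det_mul, Matrix.det_mul]
  have hdet : (W.map ⇑f).det * (V.map ⇑f).det = 1 := by
    rw [← Matrix.det_mul, hWV, Matrix.det_one]
  calc (W.map ⇑f).det * (charmatrix M).det * (V.map ⇑f).det
      = ((W.map ⇑f).det * (V.map ⇑f).det) * (charmatrix M).det := by ring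
    _ = M.charpoly := by rw [hdet, one_mul]; rfl

/-- If a real symmetric matrix is orthogonally similar to `diagonal d`, then for any `g`,
the sum of `g` over its eigenvalues equals the sum of `g` over `d`. -/
lemma eig_sum_eq {N : ℕ} (A : Matrix (Fin N) (Fin N) ℝ) (hA : A.IsHermitian)
    (W : Matrix (Fin N) (Fin N) ℝ) (d : Fin N → ℝ)
    (hW : W * Wᵀ = 1) (hAW : A = W * Matrix.diagonal d * Wᵀ) (g : ℝ → ℝ) :
    ∑ i, g (hA.eigenvalues i) = ∑ i, g (d i) := by
  have hU := hA.spectral_theorem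
  have hU1 : (hA.eigenvectorUnitary : Matrix (Fin N) (Fin N) ℝ)
      * star (hA.eigenvectorUnitary : Matrix (Fin N) (Fin N) ℝ) = 1 :=
    Matrix.mem_unitaryGroup_iff.mp hA.eigenvectorUnitary.2
  have hd : (RCLike.ofReal ∘ hA.eigenvalues : Fin N → ℝ) = hA.eigenvalues := by
    funext i; simp
  rw [hd] at hU
  have c1 : A.charpoly = ∏ i, (X - C (hA.eigenvalues i)) := by
    conv_lhs => rw [hU]
    rw [Unitary.conjStarAlgAut_apply, charpoly_conj_eq _ _ _ hU1, charpoly_diag]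
  have c2 : A.charpoly = ∏ i, (X - C (d i)) := by
    conv_lhs => rw [hAW]
    rw [charpoly_conj_eq _ _ _ hW, charpoly_diag]
  have hroots : (Finset.univ.val.map hA.eigenvalues) = (Finset.univ.val.map d) := by
    have r1 : ((Finset.univ.val.map hA.eigenvalues).map (fun a => X - C a)).prod.roots
        = Finset.univ.val.map hA.eigenvalues := Polynomial.roots_multiset_prod_X_sub_C _
    have r2 : ((Finset.univ.val.map d).map (fun a => X - C a)).prod.roots
        = Finset.univ.val.map d := Polynomial.roots_multiset_prod_X_sub_C _
    have e1 : ((Finset.univ.val.map hA.eigenvalues).map (fun a => X - C a)).prod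
        = ∏ i, (X - C (hA.eigenvalues i)) := by
      rw [Multiset.map_map]; rfl
    have e2 : ((Finset.univ.val.map d).map (fun a => X - C a)).prod
        = ∏ i, (X - C (d i)) := by
      rw [Multiset.map_map]; rfl
    rw [← r1, ← r2, e1, e2, ← c1, ← c2]
  calc ∑ i, g (hA.eigenvalues i) = ((Finset.univ.val.map hA.eigenvalues).map g).sum := by
        rw [Multiset.map_map]; rfl
    _ = ((Finset.univ.val.map d).map g).sum := by rw [hroots]
    _ = ∑ i, g (d i) := by rw [Multiset.map_map]; rfl

lemma real_inner_pi {n : ℕ} (x y : EuclideanSpace ℝ (Fin n)) :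
    (inner ℝ x y : ℝ) = ∑ t, x t * y t := by
  simp [PiLp.inner_apply, RCLike.inner_apply, mul_comm]

lemma exists_extension {k n : ℕ} (hk : k ≤ n) (v : Fin k → Fin n → ℝ)
    (hv : ∀ i j, ∑ t, v i t * v j t = if i = j then (1:ℝ) else 0) :
    ∃ w : Fin n → Fin n → ℝ,
      (∀ i j, ∑ t, w i t * w j t = if i = j then (1:ℝ) else 0) ∧
      (∀ a b, ∑ j, w j a * w j b = if a = b then (1:ℝ) else 0) ∧
      (∀ (j : Fin n) (h : (j : ℕ) < k), w j = v ⟨j, h⟩) := by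
  classical
  set v' : Fin n → EuclideanSpace ℝ (Fin n) :=
    fun j => if h : (j : ℕ) < k then WithLp.toLp 2 (v ⟨j, h⟩) else 0 with hv'
  set s : Set (Fin n) := {j | (j : ℕ) < k} with hs
  have horth : Orthonormal ℝ (s.restrict v') := by
    rw [orthonormal_iff_ite]
    rintro ⟨i, hi⟩ ⟨j, hj⟩
    have hi' : (i : ℕ) < k := hi
    have hj' : (j : ℕ) < k := hj
    have : (inner ℝ (s.restrict v' ⟨i, hi⟩) (s.restrict v' ⟨j, hj⟩) : ℝ)
        = ∑ t, v ⟨i, hi'⟩ t * v ⟨j, hj'⟩ t := by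
      rw [real_inner_pi]
      show ∑ t, (if h : (i : ℕ) < k then WithLp.toLp 2 (v ⟨i, h⟩) else 0 : EuclideanSpace ℝ (Fin n)) t
          * (if h : (j : ℕ) < k then WithLp.toLp 2 (v ⟨j, h⟩) else 0 : EuclideanSpace ℝ (Fin n)) t = _
      rw [dif_pos hi', dif_pos hj']
    rw [this, hv]
    simp [Fin.ext_iff, Subtype.ext_iff]
  have hcard : Module.finrank ℝ (EuclideanSpace ℝ (Fin n)) = Fintype.card (Fin n) := by
    simp
  obtain ⟨b, hb⟩ := horth.exists_orthonormalBasis_extension_of_card_eq hcard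
  refine ⟨fun j => (b j : Fin n → ℝ), ?_, ?_, ?_⟩
  · intro i j
    have := (orthonormal_iff_ite.mp b.orthonormal) i j
    rw [real_inner_pi] at this
    simpa using this
  · -- column orthonormality via matrices
    intro a c
    have hrow : (Matrix.of (fun j t => (b j : Fin n → ℝ) t)
        * (Matrix.of (fun j t => (b j : Fin n → ℝ) t))ᵀ) = 1 := by
      ext i j
      have := (orthonormal_iff_ite.mp b.orthonormal) i j
      rw [real_inner_pi] at this
      simp only [Matrix.mul_apply, Matrix.transpose_apply, Matrix.of_apply, Matrix.one_apply]
      simpa using this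
    have hcol := mul_eq_one_comm.mp hrow
    have := congrFun (congrFun hcol a) c
    simp only [Matrix.mul_apply, Matrix.transpose_apply, Matrix.of_apply, Matrix.one_apply] at this
    simpa using this
  · intro j h
    have hj : j ∈ s := h
    have := hb j hj
    have h2 : v' j = WithLp.toLp 2 (v ⟨j, h⟩) := by simp [hv', dif_pos h]
    funext t
    have := congrArg (fun z : EuclideanSpace ℝ (Fin n) => z t) (this.trans h2)
    simpa using this

lemma traceNorm_eq_sum_sqrt {m n : ℕ} (X : Matrix (Fin m) (Fin n) ℝ) :
    traceNorm X = ∑ i, Real.sqrt ((show (Xᵀ * X).IsHermitian by simpa [Matrix.conjTranspose_eq_transpose_of_trivial] using Matrix.isHermitian_conjTranspose_mul_self X).eigenvalues i) := by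
  simp only [traceNorm, svalsFin]
  exact sum_sortedDesc _

lemma gram_entries {k m n : ℕ} (u : Fin k → Fin m → ℝ) (v : Fin k → Fin n → ℝ)
    (c : Fin k → ℝ)
    (hu : ∀ i j, ∑ t, u i t * u j t = if i = j then (1:ℝ) else 0)
    (a b : Fin n) :
    (((∑ i, c i • Matrix.vecMulVec (u i) (v i))ᴴ
      * (∑ i, c i • Matrix.vecMulVec (u i) (v i))) a b)
      = ∑ i, c i ^ 2 * (v i a * v i b) := by
  classical
  simp only [Matrix.mul_apply, Matrix.conjTranspose_apply, Matrix.sum_apply,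
    Matrix.smul_apply, Matrix.vecMulVec_apply, smul_eq_mul, star_trivial]
  have e1 : ∀ j : Fin m, (∑ i, c i * (u i j * v i a)) * (∑ i, c i * (u i j * v i b))
      = ∑ i, ∑ l, (c i * c l * (v i a * v l b)) * (u i j * u l j) := by
    intro j
    rw [Finset.sum_mul_sum]
    apply Finset.sum_congr rfl; intro i _
    apply Finset.sum_congr rfl; intro l _
    ring
  simp_rw [e1]
  rw [Finset.sum_comm]
  have e2 : ∀ i : Fin k, ∑ j : Fin m, ∑ l, (c i * c l * (v i a * v l b)) * (u i j * u l j)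
      = ∑ l, (c i * c l * (v i a * v l b)) * ∑ j, u i j * u l j := by
    intro i
    rw [Finset.sum_comm]
    apply Finset.sum_congr rfl; intro l _
    rw [Finset.mul_sum]
  simp_rw [e2, hu]
  apply Finset.sum_congr rfl; intro i _
  simp only [mul_ite, mul_one, mul_zero, Finset.sum_ite_eq, Finset.mem_univ, if_true]
  ring

lemma traceNorm_sum_vecMulVec {k m n : ℕ} (hk : k ≤ n)
    (u : Fin k → Fin m → ℝ) (v : Fin k → Fin n → ℝ) (c : Fin k → ℝ)
    (hu : ∀ i j, ∑ t, u i t * u j t = if i = j then (1:ℝ) else 0)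
    (hv : ∀ i j, ∑ t, v i t * v j t = if i = j then (1:ℝ) else 0)
    (hc : ∀ i, 0 ≤ c i) :
    traceNorm (∑ i, c i • Matrix.vecMulVec (u i) (v i)) = ∑ i, c i := by
  classical
  set P : Matrix (Fin m) (Fin n) ℝ := ∑ i, c i • Matrix.vecMulVec (u i) (v i) with hP
  obtain ⟨w, hw1, hw2, hw3⟩ := exists_extension hk v hv
  set W : Matrix (Fin n) (Fin n) ℝ := Matrix.of (fun a j => w j a) with hW
  set d : Fin n → ℝ := fun j => if h : (j : ℕ) < k then (c ⟨j, h⟩) ^ 2 else 0 with hd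
  have hWWt : W * Wᵀ = 1 := by
    ext a b
    simp only [Matrix.mul_apply, Matrix.transpose_apply, Matrix.one_apply, hW, Matrix.of_apply]
    exact hw2 a b
  have hAW : Pᴴ * P = W * Matrix.diagonal d * Wᵀ := by
    ext a b
    rw [gram_entries u v c hu a b]
    have : (W * Matrix.diagonal d * Wᵀ) a b = ∑ j, d j * (w j a * w j b) := by
      rw [Matrix.mul_assoc]
      simp only [Matrix.mul_apply, Matrix.diagonal_mul, Matrix.transpose_apply, hW,
        Matrix.of_apply, Matrix.diagonal_apply, Matrix.mul_apply]
      apply Finset.sum_congr rfl; intro j _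
      simp only [ite_mul, zero_mul, Finset.sum_ite_eq, Finset.mem_univ, if_true]
      ring
    rw [this]
    have : ∀ j : Fin n, d j * (w j a * w j b)
        = if h : (j : ℕ) < k then (c ⟨j, h⟩) ^ 2 * (v ⟨j, h⟩ a * v ⟨j, h⟩ b) else 0 := by
      intro j
      by_cases h : (j : ℕ) < k
      · rw [dif_pos h, hd]; simp only [dif_pos h]; rw [hw3 j h]
      · rw [dif_neg h, hd]; simp only [dif_neg h, zero_mul]
    simp_rw [this]
    exact (sum_dlt hk (fun i => c i ^ 2 * (v i a * v i b))).symm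
  have hsum := eig_sum_eq (Pᵀ * P) (show (Pᵀ * P).IsHermitian by simpa [Matrix.conjTranspose_eq_transpose_of_trivial] using Matrix.isHermitian_conjTranspose_mul_self P) W d hWWt
    (by rw [← Matrix.conjTranspose_eq_transpose_of_trivial]; exact hAW) Real.sqrt
  rw [traceNorm_eq_sum_sqrt, hsum]
  have : ∀ j : Fin n, Real.sqrt (d j)
      = if h : (j : ℕ) < k then c ⟨j, h⟩ else 0 := by
    intro j
    by_cases h : (j : ℕ) < k
    · rw [hd]; simp only [dif_pos h]; exact Real.sqrt_sq (hc _)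
    · rw [hd]; simp only [dif_neg h]; exact Real.sqrt_zero
  simp_rw [this]
  exact sum_dlt hk (fun i => c i)

lemma rows_to_cols {n : ℕ} (w : Fin n → Fin n → ℝ)
    (hw : ∀ i j, ∑ t, w i t * w j t = if i = j then (1:ℝ) else 0) :
    ∀ a b, ∑ i, w i a * w i b = if a = b then (1:ℝ) else 0 := by
  intro a b
  have hrow : (Matrix.of w * (Matrix.of w)ᵀ) = 1 := by
    ext i j
    simp only [Matrix.mul_apply, Matrix.transpose_apply, Matrix.of_apply, Matrix.one_apply]
    exact hw i j
  have hcol := mul_eq_one_comm.mp hrow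
  have := congrFun (congrFun hcol a) b
  simp only [Matrix.mul_apply, Matrix.transpose_apply, Matrix.of_apply, Matrix.one_apply] at this
  exact this

lemma frobInner_sum_right {m n : ℕ} {ι : Type*} (s : Finset ι)
    (A : Matrix (Fin m) (Fin n) ℝ) (B : ι → Matrix (Fin m) (Fin n) ℝ) :
    frobInner A (∑ i ∈ s, B i) = ∑ i ∈ s, frobInner A (B i) := by
  classical
  induction s using Finset.induction with
  | empty => simp [frobInner]
  | @insert _ _ h ih =>
    rw [Finset.sum_insert h, Finset.sum_insert h, ← ih]
    simp [frobInner, Matrix.add_apply, mul_add, Finset.sum_add_distrib]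

lemma frobInner_le_mul_traceNorm {m n : ℕ} (A Z : Matrix (Fin m) (Fin n) ℝ) (c : ℝ)
    (hc : 0 ≤ c)
    (hA : ∀ (x : Fin m → ℝ) (y : Fin n → ℝ),
      frobInner A (Matrix.vecMulVec x y) ≤ c * Real.sqrt (∑ t, x t ^ 2) * Real.sqrt (∑ t, y t ^ 2)) :
    frobInner A Z ≤ c * traceNorm Z := by
  classical
  set hH := (show (Zᵀ * Z).IsHermitian by simpa [Matrix.conjTranspose_eq_transpose_of_trivial] using Matrix.isHermitian_conjTranspose_mul_self Z) with hHdef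
  set w : Fin n → Fin n → ℝ := fun i => (hH.eigenvectorBasis i : Fin n → ℝ) with hwdef
  have hworth : ∀ i j, ∑ t, w i t * w j t = if i = j then (1:ℝ) else 0 := by
    intro i j
    have := (orthonormal_iff_ite.mp hH.eigenvectorBasis.orthonormal) i j
    rw [real_inner_pi] at this
    simpa using this
  have hwcol := rows_to_cols w hworth
  have hdecomp : Z = ∑ i, Matrix.vecMulVec (Z *ᵥ w i) (w i) := by
    ext j t
    simp only [Matrix.sum_apply, Matrix.vecMulVec_apply, Matrix.mulVec, dotProduct]
    have : ∀ i : Fin n, (∑ l, Z j l * w i l) * w i t = ∑ l, Z j l * (w i l * w i t) := by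
      intro i; rw [Finset.sum_mul]; apply Finset.sum_congr rfl; intro l _; ring
    simp_rw [this]
    rw [Finset.sum_comm]
    have : ∀ l, ∑ i, Z j l * (w i l * w i t) = Z j l * (if l = t then (1:ℝ) else 0) := by
      intro l; rw [← Finset.mul_sum, hwcol l t]
    simp_rw [this]
    simp [Finset.sum_ite_eq]
  have hnorm : ∀ i, ∑ t, (Z *ᵥ w i) t ^ 2 = hH.eigenvalues i := by
    intro i
    have heig : (Zᴴ * Z) *ᵥ w i = hH.eigenvalues i • w i := hH.mulVec_eigenvectorBasis i
    have h1 : ∑ t, (Z *ᵥ w i) t ^ 2 = (Z *ᵥ w i) ⬝ᵥ (Z *ᵥ w i) := by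
      simp [dotProduct, sq]
    have h2 : (Z *ᵥ w i) ⬝ᵥ (Z *ᵥ w i) = ((Zᴴ * Z) *ᵥ w i) ⬝ᵥ w i := by
      rw [← Matrix.mulVec_mulVec]
      rw [dotProduct_mulVec]
      congr 1
      ext l
      simp only [Matrix.vecMul, dotProduct, Matrix.conjTranspose_apply, star_trivial,
        Matrix.mulVec]
      apply Finset.sum_congr rfl
      intro j _
      ring
    rw [h1, h2, heig]
    simp only [smul_dotProduct, smul_eq_mul]
    have : w i ⬝ᵥ w i = 1 := by
      have := hworth i i
      simpa [dotProduct] using this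
    rw [this, mul_one]
  have hnonneg : ∀ i, 0 ≤ hH.eigenvalues i := by
    intro i
    exact (Matrix.posSemidef_conjTranspose_mul_self Z).eigenvalues_nonneg i
  calc frobInner A Z = ∑ i, frobInner A (Matrix.vecMulVec (Z *ᵥ w i) (w i)) := by
        conv_lhs => rw [hdecomp]
        exact frobInner_sum_right _ A _
    _ ≤ ∑ i, c * Real.sqrt (hH.eigenvalues i) := by
        apply Finset.sum_le_sum
        intro i _
        have := hA (Z *ᵥ w i) (w i)
        have hw1 : Real.sqrt (∑ t, w i t ^ 2) = 1 := by
          have h0 : (∑ t, w i t * w i t) = 1 := by simpa using hworth i i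
          rw [show (∑ t, w i t ^ 2) = ∑ t, w i t * w i t by simp [sq], h0, Real.sqrt_one]
        rw [hnorm i, hw1, mul_one] at this
        exact this
    _ = c * traceNorm Z := by
        rw [traceNorm_eq_sum_sqrt, Finset.mul_sum]

lemma frobInner_comm {m n : ℕ} (A B : Matrix (Fin m) (Fin n) ℝ) :
    frobInner A B = frobInner B A := by
  simp [frobInner, mul_comm]

lemma frobInner_smul_right {m n : ℕ} (c : ℝ) (A B : Matrix (Fin m) (Fin n) ℝ) :
    frobInner A (c • B) = c * frobInner A B := by
  simp only [frobInner, Matrix.smul_apply, smul_eq_mul, Finset.mul_sum]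
  apply Finset.sum_congr rfl; intro i _
  apply Finset.sum_congr rfl; intro j _
  ring

lemma frobInner_sub_right {m n : ℕ} (A B C : Matrix (Fin m) (Fin n) ℝ) :
    frobInner A (B - C) = frobInner A B - frobInner A C := by
  simp only [frobInner, Matrix.sub_apply, mul_sub, Finset.sum_sub_distrib]

lemma frobInner_vecMulVec_pair {m n : ℕ} (x x' : Fin m → ℝ) (y y' : Fin n → ℝ) :
    frobInner (Matrix.vecMulVec x y) (Matrix.vecMulVec x' y')
      = (∑ t, x t * x' t) * (∑ t, y t * y' t) := by
  simp only [frobInner, Matrix.vecMulVec_apply, Finset.sum_mul_sum]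
  apply Finset.sum_congr rfl; intro i _
  apply Finset.sum_congr rfl; intro j _
  ring

lemma frobInner_self_nonneg {m n : ℕ} (A : Matrix (Fin m) (Fin n) ℝ) :
    0 ≤ frobInner A A :=
  Finset.sum_nonneg fun i _ => Finset.sum_nonneg fun j _ => mul_self_nonneg _

lemma frobInner_self_eq_zero {m n : ℕ} {A : Matrix (Fin m) (Fin n) ℝ}
    (h : frobInner A A ≤ 0) : A = 0 := by
  have h0 : frobInner A A = 0 := le_antisymm h (frobInner_self_nonneg A)
  ext i j
  have hz := (Finset.sum_eq_zero_iff_of_nonneg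
    (fun i _ => Finset.sum_nonneg fun j _ => mul_self_nonneg (A i j))).mp h0 i (Finset.mem_univ i)
  have h2 := (Finset.sum_eq_zero_iff_of_nonneg
    (fun j _ => mul_self_nonneg (A i j))).mp hz j (Finset.mem_univ j)
  simpa using mul_self_eq_zero.mp h2

lemma frobNorm_eq_sqrt_frobInner {m n : ℕ} (A : Matrix (Fin m) (Fin n) ℝ) :
    frobNorm A = Real.sqrt (frobInner A A) := by
  simp [frobNorm, frobInner, sq]

lemma frobInner_expand {m n : ℕ} (A B : Matrix (Fin m) (Fin n) ℝ) :
    frobInner (A + B) (A + B)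
      = frobInner A A + 2 * frobInner A B + frobInner B B := by
  simp only [frobInner, Matrix.add_apply, Finset.mul_sum]
  have : ∀ i j, (A i j + B i j) * (A i j + B i j)
      = A i j * A i j + 2 * (A i j * B i j) + B i j * B i j := by intros; ring
  simp_rw [this, Finset.sum_add_distrib]

lemma matrix_rank_add_le {m n : ℕ} (A B : Matrix (Fin m) (Fin n) ℝ) :
    (A + B).rank ≤ A.rank + B.rank := by
  rw [Matrix.rank, Matrix.rank, Matrix.rank, Matrix.mulVecLin_add]
  have hle : LinearMap.range (A.mulVecLin + B.mulVecLin)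
      ≤ LinearMap.range A.mulVecLin ⊔ LinearMap.range B.mulVecLin := by
    rintro x ⟨y, rfl⟩
    exact Submodule.mem_sup.mpr ⟨A.mulVecLin y, ⟨y, rfl⟩, B.mulVecLin y, ⟨y, rfl⟩, rfl⟩
  calc Module.finrank ℝ (LinearMap.range (A.mulVecLin + B.mulVecLin))
      ≤ Module.finrank ℝ ↥(LinearMap.range A.mulVecLin ⊔ LinearMap.range B.mulVecLin) :=
        Submodule.finrank_mono hle
    _ ≤ Module.finrank ℝ (LinearMap.range A.mulVecLin)
        + Module.finrank ℝ (LinearMap.range B.mulVecLin) := by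
        have := Submodule.finrank_sup_add_finrank_inf_eq
          (LinearMap.range A.mulVecLin) (LinearMap.range B.mulVecLin)
        omega

lemma rank_smul_vecMulVec_le {m n : ℕ} (c : ℝ) (x : Fin m → ℝ) (y : Fin n → ℝ) :
    (c • Matrix.vecMulVec x y).rank ≤ 1 := by
  have h1 : c • Matrix.vecMulVec x y = Matrix.vecMulVec (c • x) y := by
    ext i j
    simp [Matrix.vecMulVec_apply, mul_assoc]
  rw [h1, Matrix.vecMulVec_eq (Fin 1)]
  calc (Matrix.replicateCol (Fin 1) (c • x) * Matrix.replicateRow (Fin 1) y).rank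
      ≤ (Matrix.replicateCol (Fin 1) (c • x)).rank ⊓ (Matrix.replicateRow (Fin 1) y).rank := Matrix.rank_mul_le _ _
    _ ≤ (Matrix.replicateCol (Fin 1) (c • x)).rank := inf_le_left
    _ ≤ Fintype.card (Fin 1) := Matrix.rank_le_card_width _
    _ = 1 := by simp

lemma rank_sum_le {m n : ℕ} {ι : Type*} (s : Finset ι) (M : ι → Matrix (Fin m) (Fin n) ℝ)
    (h : ∀ i ∈ s, (M i).rank ≤ 1) : (∑ i ∈ s, M i).rank ≤ s.card := by
  classical
  induction s using Finset.induction with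
  | empty => simp
  | @insert a s ha ih =>
    rw [Finset.sum_insert ha, Finset.card_insert_of_notMem ha]
    calc (M a + ∑ i ∈ s, M i).rank ≤ (M a).rank + (∑ i ∈ s, M i).rank := matrix_rank_add_le _ _
      _ ≤ 1 + s.card := add_le_add (h a (Finset.mem_insert_self a s))
          (ih fun i hi => h i (Finset.mem_insert_of_mem hi))
      _ = s.card + 1 := by omega

lemma sub_max_eq_min {a s : ℝ} : a - max 0 (a - s) = min a s := by
  rcases le_total a s with h | h
  · rw [max_eq_left (sub_nonpos.mpr h), min_eq_left h, sub_zero]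
  · rw [max_eq_right (sub_nonneg.mpr h), min_eq_right h]; ring

lemma frobInner_pair_sums {k m n : ℕ} (u : Fin k → Fin m → ℝ) (v : Fin k → Fin n → ℝ)
    (hu : ∀ i j, ∑ t, u i t * u j t = if i = j then (1:ℝ) else 0)
    (hv : ∀ i j, ∑ t, v i t * v j t = if i = j then (1:ℝ) else 0)
    (a b : Fin k → ℝ) :
    frobInner (∑ i, a i • Matrix.vecMulVec (u i) (v i))
      (∑ i, b i • Matrix.vecMulVec (u i) (v i)) = ∑ i, a i * b i := by
  rw [frobInner_sum_right]
  have key : ∀ j, frobInner (∑ i, a i • Matrix.vecMulVec (u i) (v i))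
      (b j • Matrix.vecMulVec (u j) (v j)) = b j * a j := by
    intro j
    rw [frobInner_smul_right, frobInner_comm, frobInner_sum_right]
    have e1 : ∀ i, frobInner (Matrix.vecMulVec (u j) (v j)) (a i • Matrix.vecMulVec (u i) (v i))
        = a i * ((if j = i then (1:ℝ) else 0) * (if j = i then (1:ℝ) else 0)) := by
      intro i
      rw [frobInner_smul_right, frobInner_vecMulVec_pair, hu, hv]
    simp_rw [e1]
    simp [mul_ite, Finset.sum_ite_eq]
  simp_rw [key]
  apply Finset.sum_congr rfl
  intro i _
  ring

lemma frobInner_sum_vecMulVec_le {k m n : ℕ} (u : Fin k → Fin m → ℝ) (v : Fin k → Fin n → ℝ)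
    (hu : ∀ i j, ∑ t, u i t * u j t = if i = j then (1:ℝ) else 0)
    (hv : ∀ i j, ∑ t, v i t * v j t = if i = j then (1:ℝ) else 0)
    (e : Fin k → ℝ) (s : ℝ) (hs : 0 ≤ s) (he : ∀ i, |e i| ≤ s)
    (x : Fin m → ℝ) (y : Fin n → ℝ) :
    frobInner (∑ i, e i • Matrix.vecMulVec (u i) (v i)) (Matrix.vecMulVec x y)
      ≤ s * Real.sqrt (∑ t, x t ^ 2) * Real.sqrt (∑ t, y t ^ 2) := by
  set ci : Fin k → ℝ := fun i => ∑ t, u i t * x t with hci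
  set di : Fin k → ℝ := fun i => ∑ t, v i t * y t with hdi
  have hval : frobInner (∑ i, e i • Matrix.vecMulVec (u i) (v i)) (Matrix.vecMulVec x y)
      = ∑ i, e i * (ci i * di i) := by
    rw [frobInner_comm, frobInner_sum_right]
    apply Finset.sum_congr rfl
    intro i _
    rw [frobInner_smul_right, frobInner_vecMulVec_pair]
    have c1 : (∑ t, x t * u i t) = ci i := by
      rw [hci]; apply Finset.sum_congr rfl; intro t _; ring
    have c2 : (∑ t, y t * v i t) = di i := by
      rw [hdi]; apply Finset.sum_congr rfl; intro t _; ring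
    rw [c1, c2]
  rw [hval]
  have hbes1 : ∑ i, ci i ^ 2 ≤ ∑ t, x t ^ 2 := bessel u hu x
  have hbes2 : ∑ i, di i ^ 2 ≤ ∑ t, y t ^ 2 := bessel v hv y
  calc ∑ i, e i * (ci i * di i) ≤ ∑ i, s * (|ci i| * |di i|) := by
        apply Finset.sum_le_sum
        intro i _
        calc e i * (ci i * di i) ≤ |e i * (ci i * di i)| := le_abs_self _
          _ = |e i| * (|ci i| * |di i|) := by rw [abs_mul, abs_mul]
          _ ≤ s * (|ci i| * |di i|) := by
              apply mul_le_mul_of_nonneg_right (he i)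
              positivity
    _ = s * ∑ i, |ci i| * |di i| := (Finset.mul_sum _ _ _).symm
    _ ≤ s * (Real.sqrt (∑ i, ci i ^ 2) * Real.sqrt (∑ i, di i ^ 2)) := by
        apply mul_le_mul_of_nonneg_left _ hs
        have hcs := Finset.sum_mul_sq_le_sq_mul_sq Finset.univ
          (fun i => |ci i|) (fun i => |di i|)
        have h1 : ∑ i, |ci i| ^ 2 = ∑ i, ci i ^ 2 := by simp [sq_abs]
        have h2 : ∑ i, |di i| ^ 2 = ∑ i, di i ^ 2 := by simp [sq_abs]
        rw [h1, h2] at hcs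
        have hnn : (0:ℝ) ≤ ∑ i, |ci i| * |di i| :=
          Finset.sum_nonneg fun i _ => mul_nonneg (abs_nonneg _) (abs_nonneg _)
        calc ∑ i, |ci i| * |di i| = Real.sqrt ((∑ i, |ci i| * |di i|) ^ 2) :=
              (Real.sqrt_sq hnn).symm
          _ ≤ Real.sqrt ((∑ i, ci i ^ 2) * ∑ i, di i ^ 2) := Real.sqrt_le_sqrt hcs
          _ = Real.sqrt (∑ i, ci i ^ 2) * Real.sqrt (∑ i, di i ^ 2) :=
              Real.sqrt_mul (Finset.sum_nonneg fun i _ => sq_nonneg _) _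
    _ ≤ s * (Real.sqrt (∑ t, x t ^ 2) * Real.sqrt (∑ t, y t ^ 2)) := by
        apply mul_le_mul_of_nonneg_left _ hs
        exact mul_le_mul (Real.sqrt_le_sqrt hbes1) (Real.sqrt_le_sqrt hbes2)
          (Real.sqrt_nonneg _) (Real.sqrt_nonneg _)
    _ = s * Real.sqrt (∑ t, x t ^ 2) * Real.sqrt (∑ t, y t ^ 2) := by ring

end Aux

/-- projection onto the trace-norm ball.
If `X = ∑ σᵢ uᵢ vᵢᵀ` is an SVD of `X` (orthonormal `u`, `v`; `σ` non-increasing and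
nonnegative) and `τ ≤ ‖X‖_*`, then for the unique `s ≥ 0` with
`∑ max 0 (σᵢ − s) = τ`, the matrix `∑ max 0 (σᵢ − s) uᵢ vᵢᵀ` is the (unique)
Euclidean projection of `X` onto the trace-norm ball of radius `τ`; moreover, if
`∑_{i≤r} σᵢ ≥ τ + r σ_{r+1}` for some `1 ≤ r ≤ min m n − 1`, this projection has
rank at most `r`. -/
theorem stmt0 {m n : ℕ} (τ : ℝ) (hτpos : 0 < τ)
    (X : Matrix (Fin m) (Fin n) ℝ)
    (u : Fin (min m n) → (Fin m → ℝ)) (v : Fin (min m n) → (Fin n → ℝ))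
    (σ : Fin (min m n) → ℝ)
    (hu : ∀ i j, ∑ k, u i k * u j k = if i = j then (1 : ℝ) else 0)
    (hv : ∀ i j, ∑ k, v i k * v j k = if i = j then (1 : ℝ) else 0)
    (hσdesc : Antitone σ) (hσnonneg : ∀ i, 0 ≤ σ i)
    (hX : X = ∑ i, σ i • Matrix.vecMulVec (u i) (v i))
    (hτle : τ ≤ traceNorm X)
    (s : ℝ) (hs : 0 ≤ s)
    (hsum : ∑ i, max 0 (σ i - s) = τ) :
    (∀ s', 0 ≤ s' → ∑ i, max 0 (σ i - s') = τ → s' = s) ∧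
    IsTraceBallProj τ X (∑ i, max 0 (σ i - s) • Matrix.vecMulVec (u i) (v i)) ∧
    (∀ Q, IsTraceBallProj τ X Q →
      Q = ∑ i, max 0 (σ i - s) • Matrix.vecMulVec (u i) (v i)) ∧
    (∀ r : ℕ, 1 ≤ r → ∀ hr : r < min m n,
      τ + (r : ℝ) * σ ⟨r, hr⟩ ≤ ∑ i : Fin (min m n), (if (i : ℕ) < r then σ i else 0) →
      (∑ i, max 0 (σ i - s) • Matrix.vecMulVec (u i) (v i)).rank ≤ r) := by
  classical
  set c : Fin (min m n) → ℝ := fun i => max 0 (σ i - s) with hcdef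
  set P : Matrix (Fin m) (Fin n) ℝ := ∑ i, c i • Matrix.vecMulVec (u i) (v i) with hPdef
  have hc : ∀ i, 0 ≤ c i := fun i => le_max_left _ _
  have htP : traceNorm P = τ := by
    rw [hPdef, traceNorm_sum_vecMulVec (min_le_right m n) u v c hu hv hc, ← hsum]
  have htX : X - P = ∑ i, min (σ i) s • Matrix.vecMulVec (u i) (v i) := by
    rw [hX, hPdef, ← Finset.sum_sub_distrib]
    apply Finset.sum_congr rfl
    intro i _
    rw [← sub_smul, hcdef]
    congr 1
    exact sub_max_eq_min
  have hmin_abs : ∀ i, |min (σ i) s| ≤ s := by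
    intro i
    rw [abs_of_nonneg (le_min (hσnonneg i) hs)]
    exact min_le_right _ _
  have hbound : ∀ (x : Fin m → ℝ) (y : Fin n → ℝ),
      frobInner (X - P) (Matrix.vecMulVec x y)
        ≤ s * Real.sqrt (∑ t, x t ^ 2) * Real.sqrt (∑ t, y t ^ 2) := by
    intro x y
    rw [htX]
    exact frobInner_sum_vecMulVec_le u v hu hv _ s hs hmin_abs x y
  have hdual : ∀ Z : Matrix (Fin m) (Fin n) ℝ, frobInner (X - P) Z ≤ s * traceNorm Z :=
    fun Z => frobInner_le_mul_traceNorm (X - P) Z s hs hbound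
  have hAP : frobInner (X - P) P = s * τ := by
    rw [htX, hPdef, frobInner_pair_sums u v hu hv]
    have : ∀ i : Fin (min m n), min (σ i) s * c i = s * c i := by
      intro i
      rcases le_total (σ i) s with h | h
      · rw [hcdef]
        simp [max_eq_left (sub_nonpos.mpr h)]
      · rw [min_eq_right h]
    simp_rw [this]
    rw [← Finset.mul_sum, hsum]
  have hquad : ∀ Z : Matrix (Fin m) (Fin n) ℝ, frobInner (X - Z) (X - Z)
      = frobInner (X - P) (X - P) + 2 * frobInner (X - P) (P - Z)
        + frobInner (P - Z) (P - Z) := by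
    intro Z
    have hsplit : X - Z = (X - P) + (P - Z) := by abel
    rw [hsplit, frobInner_expand]
  have hgain : ∀ Z : Matrix (Fin m) (Fin n) ℝ, traceNorm Z ≤ τ →
      0 ≤ frobInner (X - P) (P - Z) := by
    intro Z hZ
    rw [frobInner_sub_right, hAP]
    have h1 := hdual Z
    have h2 : s * traceNorm Z ≤ s * τ := mul_le_mul_of_nonneg_left hZ hs
    linarith
  have hproj : IsTraceBallProj τ X P := by
    constructor
    · exact le_of_eq htP
    · intro Z hZ
      rw [frobNorm_eq_sqrt_frobInner, frobNorm_eq_sqrt_frobInner]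
      apply Real.sqrt_le_sqrt
      rw [hquad Z]
      have h1 := hgain Z hZ
      have h2 := frobInner_self_nonneg (P - Z)
      linarith
  refine ⟨?_, hproj, ?_, ?_⟩
  · -- uniqueness of s
    intro s' hs' hsum'
    have mono : ∀ a b : ℝ, a < b → (∑ i, max 0 (σ i - a)) = τ →
        (∑ i, max 0 (σ i - b)) = τ → False := by
      intro a b hab hA hB
      have hex : ∃ i, 0 < max 0 (σ i - a) := by
        by_contra h
        push_neg at h
        have : ∑ i : Fin (min m n), max 0 (σ i - a) ≤ 0 :=
          Finset.sum_nonpos fun i _ => h i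
        rw [hA] at this
        linarith
      obtain ⟨i0, hi0⟩ := hex
      have hσa : a < σ i0 := by
        rcases max_cases (0:ℝ) (σ i0 - a) with ⟨he, _⟩ | ⟨he, _⟩ <;> rw [he] at hi0 <;> linarith
      have hle : ∀ i : Fin (min m n), max 0 (σ i - b) ≤ max 0 (σ i - a) :=
        fun i => max_le_max le_rfl (by linarith)
      have hlt : max 0 (σ i0 - b) < max 0 (σ i0 - a) := by
        rcases le_or_gt (σ i0 - b) 0 with h | h
        · rw [max_eq_left h, max_eq_right (by linarith : (0:ℝ) ≤ σ i0 - a)]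
          linarith
        · rw [max_eq_right h.le, max_eq_right (by linarith : (0:ℝ) ≤ σ i0 - a)]
          linarith
      have := Finset.sum_lt_sum (fun i _ => hle i) ⟨i0, Finset.mem_univ i0, hlt⟩
      rw [hA, hB] at this
      exact lt_irrefl _ this
    rcases lt_trichotomy s' s with h | h | h
    · exact (mono s' s h hsum' hsum).elim
    · exact h
    · exact (mono s s' h hsum hsum').elim
  · -- uniqueness of the projection
    intro Q hQ
    have h1 : frobNorm (X - Q) ≤ frobNorm (X - P) := hQ.2 P (le_of_eq htP)
    have h2 : frobNorm (X - P) ≤ frobNorm (X - Q) := hproj.2 Q hQ.1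
    have heq : frobNorm (X - P) = frobNorm (X - Q) := le_antisymm h2 h1
    have hI : frobInner (X - Q) (X - Q) = frobInner (X - P) (X - P) := by
      have := congrArg (fun t : ℝ => t ^ 2) heq
      simp only [frobNorm_eq_sqrt_frobInner] at this
      rw [Real.sq_sqrt (frobInner_self_nonneg _), Real.sq_sqrt (frobInner_self_nonneg _)] at this
      exact this.symm
    rw [hquad Q] at hI
    have h3 := hgain Q hQ.1
    have h4 : frobInner (P - Q) (P - Q) ≤ 0 := by linarith
    have h5 : P - Q = 0 := frobInner_self_eq_zero h4
    have : P = Q := by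
      have := sub_eq_zero.mp h5
      exact this
    exact this.symm
  · -- rank bound
    intro r hr1 hr hineq
    set t := σ ⟨r, hr⟩ with htdef
    have hrk : r ≤ min m n := hr.le
    -- rewrite the partial sums via Fin r
    have hconv : ∀ i : Fin (min m n), (if (i : ℕ) < r then σ i else 0)
        = (if h : (i : ℕ) < r then σ ⟨(i : ℕ), lt_of_lt_of_le h hrk⟩ else 0) := by
      intro i
      by_cases h : (i : ℕ) < r
      · rw [if_pos h, dif_pos h]
      · rw [if_neg h, dif_neg h]
    have hS : (∑ i : Fin (min m n), if (i : ℕ) < r then σ i else 0)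
        = ∑ j : Fin r, σ ⟨(j : ℕ), lt_of_lt_of_le j.isLt hrk⟩ := by
      simp_rw [hconv]
      exact sum_dlt hrk (fun j => σ ⟨(j : ℕ), lt_of_lt_of_le j.isLt hrk⟩)
    -- lower bound for τ
    have hlow : (∑ j : Fin r, σ ⟨(j : ℕ), lt_of_lt_of_le j.isLt hrk⟩) - r * s ≤ τ := by
      have step : ∀ i : Fin (min m n),
          (if h : (i : ℕ) < r then σ ⟨(i : ℕ), lt_of_lt_of_le h hrk⟩ - s else 0)
            ≤ max 0 (σ i - s) := by
        intro i
        by_cases h : (i : ℕ) < r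
        · rw [dif_pos h]
          have : (⟨(i : ℕ), lt_of_lt_of_le h hrk⟩ : Fin (min m n)) = i := by
            apply Fin.ext; rfl
          rw [this]
          exact le_max_right _ _
        · rw [dif_neg h]
          exact le_max_left _ _
      have := Finset.sum_le_sum (fun i (_ : i ∈ Finset.univ) => step i)
      rw [hsum] at this
      rw [sum_dlt hrk (fun j => σ ⟨(j : ℕ), lt_of_lt_of_le j.isLt hrk⟩ - s)] at this
      rw [Finset.sum_sub_distrib] at this
      simp only [Finset.sum_const, Finset.card_univ, Fintype.card_fin, nsmul_eq_mul] at this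
      linarith
    rw [hS] at hineq
    -- conclude t ≤ s
    have hts : t ≤ s := by
      have hrpos : (0:ℝ) < (r : ℝ) := by
        exact_mod_cast Nat.pos_of_ne_zero (by omega)
      nlinarith
    -- entries with index ≥ r vanish
    have hzero : ∀ i : Fin (min m n), ¬ ((i : ℕ) < r) → c i = 0 := by
      intro i hi
      push_neg at hi
      have hle : σ i ≤ t := by
        rw [htdef]
        apply hσdesc
        exact hi
      rw [hcdef]
      simp only
      rw [max_eq_left (by linarith)]
    have hPfil : P = ∑ i ∈ Finset.univ.filter (fun i : Fin (min m n) => (i : ℕ) < r),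
        c i • Matrix.vecMulVec (u i) (v i) := by
      rw [hPdef]
      symm
      apply Finset.sum_subset (Finset.filter_subset _ _)
      intro i _ hi
      simp only [Finset.mem_filter, Finset.mem_univ, true_and] at hi
      rw [hzero i hi, zero_smul]
    rw [hPfil]
    calc (∑ i ∈ Finset.univ.filter (fun i : Fin (min m n) => (i : ℕ) < r),
          c i • Matrix.vecMulVec (u i) (v i)).rank
        ≤ (Finset.univ.filter (fun i : Fin (min m n) => (i : ℕ) < r)).card :=
          rank_sum_le _ _ (fun i _ => rank_smul_vecMulVec_le _ _ _)
      _ ≤ r := by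
          have : ∀ i ∈ Finset.univ.filter (fun i : Fin (min m n) => (i : ℕ) < r),
              (i : ℕ) ∈ Finset.range r := by
            intro i hi
            simp only [Finset.mem_filter, Finset.mem_univ, true_and] at hi
            exact Finset.mem_range.mpr hi
          have hcard := Finset.card_le_card_of_injOn (fun i : Fin (min m n) => (i : ℕ)) this
            (fun a _ b _ hab => Fin.ext hab)
          simpa using hcard
end

section
/- Let f : 𝕊^n → ℝ be convex and differentiable, and let X* be a minimizer of f over the spectrahedron 𝒮_n with eigendecomposition X* = Σ_{i=1}^r λ_i v_i v_iᵀ (λ_i > 0). Then each v_i, i = 1, …, r, is an eigenvector of −∇f(X*) corresponding to its largest eigenvalue λ_1(−∇f(X*)) = −λ_n(∇f(X*)). -/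
/- Common definitions: Frobenius norm and inner product, singular values in
non-increasing order, trace (nuclear) norm, multiplicity of the top singular
value, Euclidean projection onto the trace-norm ball, the spectrahedron and its
projection, sorted eigenvalues of symmetric matrices, best rank-`r`
approximations, and the singular-value soft-thresholding (prox) operator. -/

open scoped BigOperators
open Matrix MeasureTheory ProbabilityTheory

attribute [local instance] Matrix.normedAddCommGroup Matrix.normedSpace

namespace Stmt15Helpers

open Matrix

lemma sortedDesc_zero_max {N : ℕ} (hN : 0 < N) (f : Fin N → ℝ) :
    (∀ i, f i ≤ sortedDesc f ⟨0, hN⟩) ∧ ∃ i, sortedDesc f ⟨0, hN⟩ = f i := by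
  cases N with
  | zero => omega
  | succ m =>
    have hmono := Tuple.monotone_sort f
    have hrev : (⟨0, hN⟩ : Fin (m+1)).rev = Fin.last m := by
      simp [Fin.rev, Fin.last]
    constructor
    · intro i
      have h1 : f i = (f ∘ Tuple.sort f) ((Tuple.sort f).symm i) := by simp
      have h2 := hmono (Fin.le_last ((Tuple.sort f).symm i))
      simpa [sortedDesc, hrev] using h1 ▸ h2
    · exact ⟨Tuple.sort f ((⟨0, hN⟩ : Fin (m+1)).rev), rfl⟩

lemma sortedDesc_last_min {N : ℕ} (hN : N - 1 < N) (f : Fin N → ℝ) :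
    (∀ i, sortedDesc f ⟨N-1, hN⟩ ≤ f i) ∧ ∃ i, sortedDesc f ⟨N-1, hN⟩ = f i := by
  cases N with
  | zero => omega
  | succ m =>
    have hmono := Tuple.monotone_sort f
    have hrev : (⟨m+1-1, hN⟩ : Fin (m+1)).rev = 0 := by
      simp [Fin.rev, Fin.ext_iff]
    constructor
    · intro i
      have h1 : f i = (f ∘ Tuple.sort f) ((Tuple.sort f).symm i) := by simp
      have h2 := hmono (Fin.zero_le ((Tuple.sort f).symm i))
      show f (Tuple.sort f (⟨m+1-1, hN⟩ : Fin (m+1)).rev) ≤ f i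
      rw [hrev]
      simpa using h1 ▸ h2
    · exact ⟨Tuple.sort f ((⟨m+1-1, hN⟩ : Fin (m+1)).rev), rfl⟩

lemma spectral_package {n : ℕ} {A : Matrix (Fin n) (Fin n) ℝ} (hA : A.IsHermitian) :
    ∃ w : Fin n → (Fin n → ℝ),
      (∀ i j, w i ⬝ᵥ w j = if i = j then 1 else 0) ∧
      (∀ i, A *ᵥ w i = hA.eigenvalues i • w i) ∧
      (∀ u : Fin n → ℝ, ∑ i, (w i ⬝ᵥ u) • w i = u) := by
  have key : ∀ (i : Fin n) (x : Fin n → ℝ),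
      (inner (𝕜 := ℝ) (hA.eigenvectorBasis i) (WithLp.toLp 2 x : EuclideanSpace ℝ (Fin n)))
        = (⇑(hA.eigenvectorBasis i) : Fin n → ℝ) ⬝ᵥ x := by
    intro i x
    simp [PiLp.inner_apply, dotProduct, RCLike.inner_apply, starRingEnd_apply, mul_comm]
  refine ⟨fun i => (⇑(hA.eigenvectorBasis i) : Fin n → ℝ), ?_, ?_, ?_⟩
  · intro i j
    have := orthonormal_iff_ite.mp hA.eigenvectorBasis.orthonormal i j
    rw [← key i (⇑(hA.eigenvectorBasis j))]
    simpa using this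
  · intro i; exact hA.mulVec_eigenvectorBasis i
  · intro u
    have h := hA.eigenvectorBasis.sum_repr' (WithLp.toLp 2 u : EuclideanSpace ℝ (Fin n))
    show (∑ i, ((⇑(hA.eigenvectorBasis i) : Fin n → ℝ) ⬝ᵥ u) • (⇑(hA.eigenvectorBasis i) : Fin n → ℝ)) = u
    simp_rw [← key]
    simpa using congrArg WithLp.ofLp h

lemma rayleigh_alg {n : ℕ} (A : Matrix (Fin n) (Fin n) ℝ) (w : Fin n → (Fin n → ℝ)) (ε : Fin n → ℝ)
    (heig : ∀ i, A *ᵥ w i = ε i • w i)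
    (hspan : ∀ u : Fin n → ℝ, ∑ i, (w i ⬝ᵥ u) • w i = u) (u : Fin n → ℝ) :
    A *ᵥ u = ∑ i, (ε i * (w i ⬝ᵥ u)) • w i ∧
    u ⬝ᵥ (A *ᵥ u) = ∑ i, ε i * (w i ⬝ᵥ u)^2 ∧
    u ⬝ᵥ u = ∑ i, (w i ⬝ᵥ u)^2 := by
  set c : Fin n → ℝ := fun i => w i ⬝ᵥ u with hc
  have hdot : ∀ (d : Fin n → ℝ), u ⬝ᵥ (∑ i, d i • w i) = ∑ i, d i * c i := by
    intro d
    simp only [dotProduct, Finset.sum_apply, Pi.smul_apply, smul_eq_mul, Finset.mul_sum]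
    rw [Finset.sum_comm]
    refine Finset.sum_congr rfl fun i _ => ?_
    rw [hc]
    simp only [dotProduct, Finset.mul_sum]
    exact Finset.sum_congr rfl fun k _ => by ring
  have hAu : A *ᵥ u = ∑ i, (ε i * c i) • w i := by
    conv_lhs => rw [← hspan u]
    show A.mulVecLin (∑ i, c i • w i) = _
    rw [map_sum]
    refine Finset.sum_congr rfl fun i _ => ?_
    rw [_root_.map_smul, Matrix.mulVecLin_apply, heig i, smul_smul, mul_comm]
  refine ⟨hAu, ?_, ?_⟩
  · rw [hAu, hdot]
    exact Finset.sum_congr rfl fun i _ => by ring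
  · conv_lhs => rw [show u ⬝ᵥ u = u ⬝ᵥ (∑ i, c i • w i) by rw [hspan u]]
    rw [hdot]
    exact Finset.sum_congr rfl fun i _ => by ring

lemma rayleigh_lower {n : ℕ} {A : Matrix (Fin n) (Fin n) ℝ} {w : Fin n → (Fin n → ℝ)}
    {ε : Fin n → ℝ} (heig : ∀ i, A *ᵥ w i = ε i • w i)
    (hspan : ∀ u : Fin n → ℝ, ∑ i, (w i ⬝ᵥ u) • w i = u)
    {m : ℝ} (hm : ∀ i, m ≤ ε i) {u : Fin n → ℝ} (hu : u ⬝ᵥ u = 1) :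
    m ≤ u ⬝ᵥ (A *ᵥ u) := by
  obtain ⟨-, h2, h3⟩ := rayleigh_alg A w ε heig hspan u
  rw [h2]
  have : m = ∑ i, m * (w i ⬝ᵥ u)^2 := by
    rw [← Finset.mul_sum, ← h3, hu, mul_one]
  rw [this]
  exact Finset.sum_le_sum fun i _ => mul_le_mul_of_nonneg_right (hm i) (sq_nonneg _)

lemma rayleigh_upper {n : ℕ} {A : Matrix (Fin n) (Fin n) ℝ} {w : Fin n → (Fin n → ℝ)}
    {ε : Fin n → ℝ} (heig : ∀ i, A *ᵥ w i = ε i • w i)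
    (hspan : ∀ u : Fin n → ℝ, ∑ i, (w i ⬝ᵥ u) • w i = u)
    {M : ℝ} (hM : ∀ i, ε i ≤ M) {u : Fin n → ℝ} (hu : u ⬝ᵥ u = 1) :
    u ⬝ᵥ (A *ᵥ u) ≤ M := by
  obtain ⟨-, h2, h3⟩ := rayleigh_alg A w ε heig hspan u
  rw [h2]
  have : M = ∑ i, M * (w i ⬝ᵥ u)^2 := by
    rw [← Finset.mul_sum, ← h3, hu, mul_one]
  rw [this]
  exact Finset.sum_le_sum fun i _ => mul_le_mul_of_nonneg_right (hM i) (sq_nonneg _)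

lemma rayleigh_eq_min {n : ℕ} {A : Matrix (Fin n) (Fin n) ℝ} {w : Fin n → (Fin n → ℝ)}
    {ε : Fin n → ℝ} (heig : ∀ i, A *ᵥ w i = ε i • w i)
    (hspan : ∀ u : Fin n → ℝ, ∑ i, (w i ⬝ᵥ u) • w i = u)
    {m : ℝ} (hm : ∀ i, m ≤ ε i) {u : Fin n → ℝ} (hu : u ⬝ᵥ u = 1)
    (heq : u ⬝ᵥ (A *ᵥ u) = m) : A *ᵥ u = m • u := by
  obtain ⟨h1, h2, h3⟩ := rayleigh_alg A w ε heig hspan u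
  have hzero : ∑ i, (ε i - m) * (w i ⬝ᵥ u)^2 = 0 := by
    have : ∑ i, (ε i - m) * (w i ⬝ᵥ u)^2
        = (∑ i, ε i * (w i ⬝ᵥ u)^2) - m * ∑ i, (w i ⬝ᵥ u)^2 := by
      rw [Finset.mul_sum, ← Finset.sum_sub_distrib]
      exact Finset.sum_congr rfl fun i _ => by ring
    rw [this, ← h2, ← h3, hu, heq, mul_one, sub_self]
  have hterm : ∀ i ∈ Finset.univ, (ε i - m) * (w i ⬝ᵥ u)^2 = 0 := by
    rw [← Finset.sum_eq_zero_iff_of_nonneg]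
    · exact hzero
    · exact fun i _ => mul_nonneg (by linarith [hm i]) (sq_nonneg _)
  have hkey : ∀ i, ε i * (w i ⬝ᵥ u) = m * (w i ⬝ᵥ u) := by
    intro i
    rcases mul_eq_zero.mp (hterm i (Finset.mem_univ i)) with h | h
    · have : ε i = m := by linarith [sub_eq_zero.mp h]
      rw [this]
    · have : w i ⬝ᵥ u = 0 := by
        have := sq_eq_zero_iff.mp h
        exact this
      rw [this, mul_zero, mul_zero]
  rw [h1]
  have : ∑ i, (ε i * (w i ⬝ᵥ u)) • w i = ∑ i, (m * (w i ⬝ᵥ u)) • w i :=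
    Finset.sum_congr rfl fun i _ => by rw [hkey i]
  rw [this]
  conv_rhs => rw [← hspan u]
  rw [Finset.smul_sum]
  exact Finset.sum_congr rfl fun i _ => by rw [smul_smul]

lemma vecMulVec_mem_spectra {n : ℕ} {u : Fin n → ℝ} (hu : u ⬝ᵥ u = 1) :
    Matrix.vecMulVec u u ∈ SpectraSet n := by
  have hmv : ∀ x : Fin n → ℝ, Matrix.vecMulVec u u *ᵥ x = (u ⬝ᵥ x) • u := by
    intro x
    ext i
    simp only [Matrix.mulVec, Matrix.vecMulVec_apply, dotProduct, Pi.smul_apply,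
      smul_eq_mul, Finset.sum_mul]
    exact Finset.sum_congr rfl fun j _ => by ring
  refine ⟨Matrix.PosSemidef.of_dotProduct_mulVec_nonneg ?_ ?_, ?_⟩
  · ext i j
    simp [Matrix.conjTranspose_apply, Matrix.vecMulVec_apply, mul_comm]
  · intro x
    rw [hmv x, star_trivial, dotProduct_smul, smul_eq_mul, dotProduct_comm]
    exact mul_self_nonneg _
  · rw [show (Matrix.vecMulVec u u).trace = u ⬝ᵥ u by
      simp [Matrix.trace, Matrix.diag, Matrix.vecMulVec_apply, dotProduct]]
    exact hu

lemma frobInner_vecMulVec {n : ℕ} (G : Matrix (Fin n) (Fin n) ℝ) (u : Fin n → ℝ) :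
    frobInner G (Matrix.vecMulVec u u) = u ⬝ᵥ (G *ᵥ u) := by
  simp only [frobInner, Matrix.vecMulVec_apply, dotProduct, Matrix.mulVec,
    Finset.mul_sum]
  exact Finset.sum_congr rfl fun i _ => Finset.sum_congr rfl fun j _ => by ring

lemma spectra_convex {n : ℕ} {X Z : Matrix (Fin n) (Fin n) ℝ} (hX : X ∈ SpectraSet n)
    (hZ : Z ∈ SpectraSet n) {t : ℝ} (ht : t ∈ Set.Icc (0:ℝ) 1) :
    X + t • (Z - X) ∈ SpectraSet n := by
  have hrw : X + t • (Z - X) = (1 - t) • X + t • Z := by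
    rw [smul_sub, sub_smul, one_smul]; abel
  rw [hrw]
  constructor
  · refine Matrix.PosSemidef.of_dotProduct_mulVec_nonneg ?_ ?_
    · show ((1 - t) • X + t • Z)ᴴ = _
      rw [conjTranspose_add, conjTranspose_smul, conjTranspose_smul, hX.1.1, hZ.1.1]
      simp
    · intro x
      have h1 := hX.1.dotProduct_mulVec_nonneg x
      have h2 := hZ.1.dotProduct_mulVec_nonneg x
      have e : star x ⬝ᵥ (((1 - t) • X + t • Z) *ᵥ x)
          = (1-t) * (star x ⬝ᵥ (X *ᵥ x)) + t * (star x ⬝ᵥ (Z *ᵥ x)) := by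
        rw [add_mulVec, dotProduct_add, smul_mulVec, smul_mulVec,
          dotProduct_smul, dotProduct_smul, smul_eq_mul, smul_eq_mul]
      rw [e]
      have h3 : (0:ℝ) ≤ 1 - t := by linarith [ht.2]
      exact add_nonneg (mul_nonneg h3 h1) (mul_nonneg ht.1 h2)
  · rw [trace_add, trace_smul, trace_smul, hX.2, hZ.2]
    simp

lemma variational {n : ℕ} (f : Matrix (Fin n) (Fin n) ℝ → ℝ)
    (G : Matrix (Fin n) (Fin n) ℝ) (Xstar : Matrix (Fin n) (Fin n) ℝ)
    (hdiff : HasFDerivAt f (frobCLM G) Xstar)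
    (hfeas : Xstar ∈ SpectraSet n)
    (hopt : ∀ Z ∈ SpectraSet n, f Xstar ≤ f Z)
    {Z : Matrix (Fin n) (Fin n) ℝ} (hZ : Z ∈ SpectraSet n) :
    frobInner G Xstar ≤ frobInner G Z := by
  set D := Z - Xstar with hD
  have hlin : HasDerivAt (fun t : ℝ => Xstar + t • D) D 0 := by
    have h := ((hasDerivAt_id (0:ℝ)).smul_const D).const_add Xstar; rw [one_smul] at h; exact h
  have hf0 : HasFDerivAt f (frobCLM G) ((fun t : ℝ => Xstar + t • D) 0) := by
    simpa using hdiff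
  have hg : HasDerivAt (fun t : ℝ => f (Xstar + t • D)) (frobInner G D) 0 := by
    have := hf0.comp_hasDerivAt 0 hlin
    exact this
  have hmono : ∀ t ∈ Set.Icc (0:ℝ) 1, f Xstar ≤ f (Xstar + t • D) := fun t ht =>
    hopt _ (spectra_convex hfeas hZ ht)
  have h0 : 0 ≤ frobInner G D := by
    have htend := (hg.hasDerivWithinAt (s := Set.Ioi (0:ℝ)))
    rw [hasDerivWithinAt_iff_tendsto_slope] at htend
    have hss : Set.Ioi (0:ℝ) \ {0} = Set.Ioi 0 := by simp
    rw [hss] at htend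
    refine ge_of_tendsto htend ?_
    filter_upwards [Ioc_mem_nhdsGT_of_mem (by norm_num : (0:ℝ) ∈ Set.Ico (0:ℝ) 1),
      self_mem_nhdsWithin] with t ht ht'
    have h1 : f Xstar ≤ f (Xstar + t • D) := hmono t ⟨le_of_lt ht.1, ht.2⟩
    have h2 : (0:ℝ) < t := ht'
    show (0:ℝ) ≤ slope (fun t : ℝ => f (Xstar + t • D)) 0 t
    rw [slope_def_field]
    apply div_nonneg
    · simpa using sub_nonneg.mpr h1
    · simpa using le_of_lt h2
  have hsub : frobInner G D = frobInner G Z - frobInner G Xstar := by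
    simp [frobInner, hD, Matrix.sub_apply, mul_sub, Finset.sum_sub_distrib]
  linarith [hsub ▸ h0]

end Stmt15Helpers

/-- If `X* = ∑_{i=1}^r λᵢ vᵢ vᵢᵀ` (λᵢ > 0) is an
eigendecomposition of a minimizer `X*` of convex differentiable `f` over the
spectrahedron, then each `vᵢ` is an eigenvector of `−∇f(X*)` for its largest
eigenvalue `λ₁(−∇f(X*)) = −λ_n(∇f(X*))`. -/
theorem stmt15 {n : ℕ} (f : Matrix (Fin n) (Fin n) ℝ → ℝ)
    (gradf : Matrix (Fin n) (Fin n) ℝ → Matrix (Fin n) (Fin n) ℝ)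
    (hconv : ConvexOn ℝ Set.univ f)
    (hdiff : ∀ X, HasFDerivAt f (frobCLM (gradf X)) X)
    (Xstar : Matrix (Fin n) (Fin n) ℝ)
    (hfeas : Xstar ∈ SpectraSet n)
    (hopt : ∀ Z ∈ SpectraSet n, f Xstar ≤ f Z)
    (hsym : (gradf Xstar).IsHermitian)
    (r : ℕ) (v : Fin r → (Fin n → ℝ)) (lam : Fin r → ℝ)
    (hv : ∀ i j, ∑ k, v i k * v j k = if i = j then (1 : ℝ) else 0)
    (hlampos : ∀ i, 0 < lam i)
    (hX : Xstar = ∑ i, lam i • Matrix.vecMulVec (v i) (v i)) :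
    (∀ i, (-(gradf Xstar)).mulVec (v i) = evalI (-(gradf Xstar)) 0 • v i) ∧
    evalI (-(gradf Xstar)) 0 = - evalI (gradf Xstar) (n - 1) := by
  classical
  open Stmt15Helpers in
  have hn : 0 < n := by
    rcases Nat.eq_zero_or_pos n with h0 | h
    · exfalso
      have h1 := hfeas.2
      subst h0
      simp [Matrix.trace] at h1
    · exact h
  have hn1 : n - 1 < n := by omega
  set G := gradf Xstar with hGdef
  obtain ⟨w, hortho, heig, hspan⟩ := Stmt15Helpers.spectral_package hsym
  set ε := hsym.eigenvalues with hεdef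
  -- the minimum eigenvalue of G
  obtain ⟨hm_le', hm_ex'⟩ := Stmt15Helpers.sortedDesc_last_min hn1 ε
  obtain ⟨m, hmdef⟩ : ∃ m, evalI G (n-1) = m := ⟨_, rfl⟩
  have hm_sorted : m = sortedDesc ε ⟨n-1, hn1⟩ := by
    rw [← hmdef, evalI, dif_pos hn1, dif_pos hsym]
  have hm_le : ∀ i, m ≤ ε i := fun i => hm_sorted ▸ hm_le' i
  obtain ⟨i0, hi0⟩ := hm_ex'
  have hi0' : m = ε i0 := hm_sorted.trans hi0
  -- the unit eigenvector for the minimum eigenvalue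
  set w0 := w i0 with hw0
  have hw0unit : w0 ⬝ᵥ w0 = 1 := by simpa using hortho i0 i0
  have hw0eig : G *ᵥ w0 = m • w0 := by rw [hw0, heig i0, ← hi0']
  -- variational inequality
  have hvar := Stmt15Helpers.variational f G Xstar (hdiff Xstar) hfeas hopt
    (Stmt15Helpers.vecMulVec_mem_spectra hw0unit)
  have hray0 : frobInner G (Matrix.vecMulVec w0 w0) = m := by
    rw [Stmt15Helpers.frobInner_vecMulVec, hw0eig, dotProduct_smul, smul_eq_mul, hw0unit,
      mul_one]
  -- unit vectors v i
  have hvunit : ∀ i, v i ⬝ᵥ v i = 1 := by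
    intro i
    have := hv i i
    simpa [dotProduct] using this
  -- frobInner G Xstar = ∑ lam i * q i
  set q : Fin r → ℝ := fun i => v i ⬝ᵥ (G *ᵥ v i) with hq
  have hCLM : ∀ H, frobCLM G H = frobInner G H := fun H => rfl
  have hXinner : frobInner G Xstar = ∑ i, lam i * q i := by
    rw [hX, ← hCLM, map_sum]
    refine Finset.sum_congr rfl fun i _ => ?_
    rw [_root_.map_smul, smul_eq_mul, hCLM, Stmt15Helpers.frobInner_vecMulVec]
  -- ∑ lam = 1
  have hsumlam : ∑ i, lam i = 1 := by
    have h1 := hfeas.2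
    rw [hX, Matrix.trace_sum] at h1
    rw [← h1]
    refine Finset.sum_congr rfl fun i _ => ?_
    rw [Matrix.trace_smul, smul_eq_mul]
    have : (Matrix.vecMulVec (v i) (v i)).trace = v i ⬝ᵥ v i := by
      simp [Matrix.trace, Matrix.diag, Matrix.vecMulVec_apply, dotProduct]
    rw [this, hvunit i, mul_one]
  -- each q i ≥ m and ∑ lam q ≤ m forces q i = m
  have hq_ge : ∀ i, m ≤ q i := fun i =>
    Stmt15Helpers.rayleigh_lower heig hspan hm_le (hvunit i)
  have hsum_le : ∑ i, lam i * q i ≤ m := by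
    calc ∑ i, lam i * q i = frobInner G Xstar := hXinner.symm
      _ ≤ frobInner G (Matrix.vecMulVec w0 w0) := hvar
      _ = m := hray0
  have hqm : ∀ i, q i = m := by
    have hterm0 : ∀ i ∈ Finset.univ, lam i * (q i - m) = 0 := by
      rw [← Finset.sum_eq_zero_iff_of_nonneg]
      · have hexp : ∑ i, lam i * (q i - m) = (∑ i, lam i * q i) - m := by
          have : ∑ i, lam i * (q i - m) = (∑ i, lam i * q i) - m * ∑ i, lam i := by
            rw [Finset.mul_sum, ← Finset.sum_sub_distrib]
            exact Finset.sum_congr rfl fun i _ => by ring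
          rw [this, hsumlam, mul_one]
        have hnonneg : 0 ≤ ∑ i, lam i * (q i - m) :=
          Finset.sum_nonneg fun i _ =>
            mul_nonneg (le_of_lt (hlampos i)) (by linarith [hq_ge i])
        have : ∑ i, lam i * (q i - m) ≤ 0 := by rw [hexp]; linarith
        linarith
      · exact fun i _ => mul_nonneg (le_of_lt (hlampos i)) (by linarith [hq_ge i])
    intro i
    have := hterm0 i (Finset.mem_univ i)
    rcases mul_eq_zero.mp this with h | h
    · exact absurd h (ne_of_gt (hlampos i))
    · linarith [sub_eq_zero.mp h]
  -- each v i is an eigenvector of G for m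
  have hGv : ∀ i, G *ᵥ v i = m • v i := fun i =>
    Stmt15Helpers.rayleigh_eq_min heig hspan hm_le (hvunit i) (hqm i)
  -- now analyze -G
  have hsymneg : (-G).IsHermitian := hsym.neg
  obtain ⟨w', hortho', heig', hspan'⟩ := Stmt15Helpers.spectral_package hsymneg
  set ε' := hsymneg.eigenvalues with hε'def
  obtain ⟨hM_le', hM_ex'⟩ := Stmt15Helpers.sortedDesc_zero_max hn ε'
  obtain ⟨M, hMdef⟩ : ∃ M, evalI (-G) 0 = M := ⟨_, rfl⟩
  have hM_sorted : M = sortedDesc ε' ⟨0, hn⟩ := by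
    rw [← hMdef, evalI, dif_pos hn, dif_pos hsymneg]
  have hM_le : ∀ i, ε' i ≤ M := fun i => hM_sorted ▸ hM_le' i
  obtain ⟨i1, hi1⟩ := hM_ex'
  have hi1' : M = ε' i1 := hM_sorted.trans hi1
  set u1 := w' i1 with hu1
  have hu1unit : u1 ⬝ᵥ u1 = 1 := by simpa using hortho' i1 i1
  have hu1eig : (-G) *ᵥ u1 = M • u1 := by rw [hu1, heig' i1, ← hi1']
  -- M = -m
  have hMm : M = -m := by
    have hle1 : M ≤ -m := by
      have h1 : u1 ⬝ᵥ ((-G) *ᵥ u1) = M := by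
        rw [hu1eig, dotProduct_smul, smul_eq_mul, hu1unit, mul_one]
      have h2 : m ≤ u1 ⬝ᵥ (G *ᵥ u1) :=
        Stmt15Helpers.rayleigh_lower heig hspan hm_le hu1unit
      have h3 : u1 ⬝ᵥ ((-G) *ᵥ u1) = -(u1 ⬝ᵥ (G *ᵥ u1)) := by
        rw [Matrix.neg_mulVec, dotProduct_neg]
      rw [h3] at h1
      linarith
    have hle2 : -m ≤ M := by
      have h1 : w0 ⬝ᵥ ((-G) *ᵥ w0) = -m := by
        rw [Matrix.neg_mulVec, dotProduct_neg, hw0eig, dotProduct_smul, smul_eq_mul,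
          hw0unit, mul_one]
      have h2 : w0 ⬝ᵥ ((-G) *ᵥ w0) ≤ M :=
        Stmt15Helpers.rayleigh_upper heig' hspan' hM_le hw0unit
      linarith
    linarith
  constructor
  · intro i
    show (-G) *ᵥ v i = evalI (-G) 0 • v i
    rw [hMdef, Matrix.neg_mulVec, hGv i, hMm, neg_smul]
  · show evalI (-G) 0 = - evalI G (n-1)
    rw [hMdef, hmdef, hMm]
end
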